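/- Let A be a (not necessarily unital) associative algebra satisfying generalized commutativity of degree n: a_1 a_2 ⋯ a_n = a_n a_{n−1} ⋯ a_1 for all a_i ∈ A. Then for every even permutation τ ∈ S_{n+1} and all a_1,...,a_{n+1} ∈ A, a_1⋯a_{n+1} = a_{τ(1)}⋯a_{τ(n+1)}. -/

import Mathlib

set_option maxHeartbeats 1000000

/-- Product of a nonempty list in a (non-unital) multiplicative structure;
junk value `0` for the empty list. -/
def listMul {A : Type*} [Mul A] [Zero A] : List A → A
  | [] => 0
  | [x] => x
  | x :: y :: l => x * listMul (y :: l)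

/-- The product `a 0 * a 1 * ⋯ * a (k-1)`. -/
def finProd {A : Type*} [Mul A] [Zero A] {k : ℕ} (a : Fin k → A) : A :=
  listMul (List.ofFn a)

section aux
variable {A : Type*} [NonUnitalRing A]

lemma listMul_cons (x : A) (l : List A) (h : l ≠ []) : listMul (x :: l) = x * listMul l := by
  cases l with
  | nil => exact absurd rfl h
  | cons y t => rfl

lemma listMul_splice (l1 : List A) (x y : A) (l2 : List A) :
    listMul (l1 ++ (x * y) :: l2) = listMul (l1 ++ x :: y :: l2) := by
  induction l1 with
  | nil =>
    cases l2 with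
    | nil => simp [listMul]
    | cons z t => simp [listMul, mul_assoc]
  | cons a t ih =>
    rw [List.cons_append, List.cons_append, listMul_cons _ _ (by simp),
      listMul_cons _ _ (by simp), ih]

omit [NonUnitalRing A] in
lemma ofFn_getElem' (m : ℕ) (l : List A) (h : l.length = m) :
    List.ofFn (fun i : Fin m => l[(i : ℕ)]'(by omega)) = l := by
  apply List.ext_getElem
  · simp [h]
  · intro i h1 h2
    simp

omit [NonUnitalRing A] in
lemma apply_congr {m : ℕ} (a : Fin m → A) {j k : Fin m} (h : (j : ℕ) = (k : ℕ)) :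
    a j = a k := congrArg a (Fin.ext h)

/-- Value of the reversed swap, as a natural number. -/
lemma swap_rev_val (n : ℕ) (p : Fin (n + 1)) (k : Fin (n + 2)) :
    ((Fin.revPerm (Equiv.swap p.castSucc p.succ k) : Fin (n + 2)) : ℕ) =
      if (k : ℕ) = (p : ℕ) then n - p
      else if (k : ℕ) = (p : ℕ) + 1 then n + 1 - p
      else n + 1 - k := by
  rcases eq_or_ne k p.castSucc with rfl | hk1
  · rw [Equiv.swap_apply_left]
    simp [Fin.val_rev]
  · rcases eq_or_ne k p.succ with rfl | hk2
    · rw [Equiv.swap_apply_right]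
      have hp : (p : ℕ) < n + 1 := p.isLt
      simp [Fin.val_rev]
    · rw [Equiv.swap_apply_of_ne_of_ne hk1 hk2]
      have e1 : (k : ℕ) ≠ (p : ℕ) := fun h => hk1 (Fin.ext (by simpa using h))
      have e2 : (k : ℕ) ≠ (p : ℕ) + 1 := fun h => hk2 (Fin.ext (by simpa using h))
      simp [Fin.val_rev, e1, e2]

end aux

section main

variable {A : Type*} [NonUnitalRing A] {n : ℕ}
variable (hrev : ∀ a : Fin (n + 1) → A, finProd a = finProd (fun i => a (Fin.revPerm i)))

include hrev

lemma listMul_reverse (l : List A) (h : l.length = n + 1) : listMul l = listMul l.reverse := by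
  have key := hrev (fun i : Fin (n+1) => l[(i : ℕ)]'(by omega))
  unfold finProd at key
  rw [ofFn_getElem' (n+1) l h] at key
  rw [key]
  congr 1
  apply List.ext_getElem
  · simp [h]
  · intro i h1 h2
    rw [List.getElem_ofFn, List.getElem_reverse]
    congr 1
    simp only [Fin.revPerm_apply, Fin.val_rev]
    simp at h2
    omega

lemma listMul_blocked (x y : A) (l1 l2 : List A) (h : l1.length + l2.length = n) :
    listMul (l1 ++ x :: y :: l2) = listMul (l2.reverse ++ x :: y :: l1.reverse) := by
  rw [← listMul_splice, ← listMul_splice]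
  rw [listMul_reverse hrev (l1 ++ (x*y) :: l2) (by simp; omega)]
  congr 1
  simp

/-- The key generators: reversal composed with an adjacent swap. -/
lemma gen_mem (p : Fin (n + 1)) (a : Fin (n + 2) → A) :
    finProd a = finProd (fun k => a (Fin.revPerm (Equiv.swap p.castSucc p.succ k))) := by
  have hp : (p : ℕ) < n + 1 := p.isLt
  have h1 : List.ofFn a =
      List.ofFn (fun t : Fin (n - (p : ℕ)) => a ⟨t, by have := t.isLt; omega⟩) ++
        [a ⟨n - (p : ℕ), by omega⟩] ++ [a ⟨n - (p : ℕ) + 1, by omega⟩] ++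
        List.ofFn (fun t : Fin (p : ℕ) => a ⟨n - (p : ℕ) + 2 + t, by have := t.isLt; omega⟩) := by
    apply List.ext_getElem
    · simp; omega
    · intro k hk1 hk2
      rw [List.getElem_ofFn]
      simp only [List.getElem_append, List.length_append, List.length_ofFn,
        List.length_singleton, List.getElem_ofFn, List.getElem_singleton]
      simp only [List.length_ofFn] at hk1
      split_ifs with c1 c2 c3
      all_goals apply apply_congr a
      all_goals try simp only [Fin.val_mk]
      all_goals omega
  have h2 : List.ofFn (fun k => a (Fin.revPerm (Equiv.swap p.castSucc p.succ k))) =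
      (List.ofFn (fun t : Fin (p : ℕ) => a ⟨n - (p : ℕ) + 2 + t, by have := t.isLt; omega⟩)).reverse ++
        [a ⟨n - (p : ℕ), by omega⟩] ++ [a ⟨n - (p : ℕ) + 1, by omega⟩] ++
        (List.ofFn (fun t : Fin (n - (p : ℕ)) => a ⟨t, by have := t.isLt; omega⟩)).reverse := by
    apply List.ext_getElem
    · simp; omega
    · intro k hk1 hk2
      rw [List.getElem_ofFn]
      simp only [List.getElem_append, List.length_append, List.length_reverse, List.length_ofFn,
        List.length_singleton, List.getElem_reverse, List.getElem_ofFn, List.getElem_singleton]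
      simp only [List.length_ofFn] at hk1
      have hv := swap_rev_val n p ⟨k, hk1⟩
      split_ifs with c1 c2 c3
      all_goals refine apply_congr a (hv.trans ?_)
      all_goals try simp only [Fin.val_mk]
      all_goals split_ifs <;> omega
  unfold finProd
  rw [h1, h2]
  rw [show ∀ (l1 l2 : List A) (x y : A), l1 ++ [x] ++ [y] ++ l2 = l1 ++ x :: y :: l2 from
    fun _ _ _ _ => by simp]
  rw [show ∀ (l1 l2 : List A) (x y : A), l1 ++ [x] ++ [y] ++ l2 = l1 ++ x :: y :: l2 from
    fun _ _ _ _ => by simp]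
  exact listMul_blocked hrev _ _ _ _ (by simp; omega)


end main

theorem generalized_commutative_even_perms {F A : Type*} [Field F] [NonUnitalRing A] [Module F A]
    [SMulCommClass F A A] [IsScalarTower F A A]
    (n : ℕ)
    (hrev : ∀ a : Fin (n + 1) → A, finProd a = finProd (fun i => a (Fin.revPerm i)))
    (τ : Equiv.Perm (Fin (n + 2))) (hτ : Equiv.Perm.sign τ = 1) :
    ∀ a : Fin (n + 2) → A, finProd a = finProd (fun i => a (τ i)) := by
  classical
  set P : Equiv.Perm (Fin (n + 2)) → Prop :=
    fun σ => ∀ a : Fin (n + 2) → A, finProd a = finProd (fun k => a (σ k)) with hPdef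
  have Pone : P 1 := fun a => rfl
  have Pmul : ∀ σ μ, P σ → P μ → P (σ * μ) :=
    fun σ μ hσ hμ a => (hσ a).trans (hμ (fun k => a (σ k)))
  have Pinv : ∀ σ, P σ → P σ⁻¹ := by
    intro σ h a
    have h2 := h (fun k => a (σ⁻¹ k))
    simp only [Equiv.Perm.inv_def, Equiv.symm_apply_apply] at h2
    exact h2.symm
  have Pgen : ∀ p : Fin (n + 1), P (Fin.revPerm * Equiv.swap p.castSucc p.succ) := by
    intro p a
    exact gen_mem hrev p a
  have Ppair : ∀ i j : Fin (n + 1),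
      P (Equiv.swap i.castSucc i.succ * Equiv.swap j.castSucc j.succ) := by
    intro i j
    have h := Pmul _ _ (Pinv _ (Pgen i)) (Pgen j)
    have e : (Fin.revPerm * Equiv.swap i.castSucc i.succ)⁻¹ *
        (Fin.revPerm * Equiv.swap j.castSucc j.succ) =
        Equiv.swap i.castSucc i.succ * Equiv.swap j.castSucc j.succ := by
      rw [mul_inv_rev, mul_assoc, inv_mul_cancel_left, Equiv.swap_inv]
    rwa [e] at h
  have key : ∀ (m : ℕ) (L : List (Equiv.Perm (Fin (n + 2)))), L.length ≤ m →
      (∀ s ∈ L, s ∈ Set.range fun i : Fin (n + 1) => Equiv.swap i.castSucc i.succ) →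
      Equiv.Perm.sign L.prod = 1 → P L.prod := by
    intro m
    induction m with
    | zero =>
      intro L hL _ _
      obtain rfl : L = [] := List.length_eq_zero_iff.mp (Nat.le_zero.mp hL)
      simpa using Pone
    | succ m ih =>
      intro L hL hmem hsign
      rcases L with _ | ⟨s, _ | ⟨t, L'⟩⟩
      · simpa using Pone
      · obtain ⟨i, rfl⟩ := hmem s (by simp)
        exfalso
        rw [List.prod_singleton] at hsign
        rw [Equiv.Perm.sign_swap (Fin.castSucc_lt_succ : i.castSucc < i.succ).ne] at hsign
        exact absurd hsign (by decide)
      · obtain ⟨i, hi⟩ := hmem s (by simp)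
        obtain ⟨j, hj⟩ := hmem t (by simp)
        subst hi hj
        rw [List.prod_cons, List.prod_cons, ← mul_assoc]
        have hsign' : Equiv.Perm.sign L'.prod = 1 := by
          rw [List.prod_cons, List.prod_cons, map_mul, map_mul,
            Equiv.Perm.sign_swap (Fin.castSucc_lt_succ : i.castSucc < i.succ).ne,
            Equiv.Perm.sign_swap (Fin.castSucc_lt_succ : j.castSucc < j.succ).ne] at hsign
          simpa using hsign
        refine Pmul _ _ (Ppair i j) (ih L' ?_ (fun x hx => hmem x (by simp [hx])) hsign')
        simp only [List.length_cons] at hL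
        omega
  have hcl := Equiv.Perm.mclosure_swap_castSucc_succ (n + 1)
  have hτ2 : τ ∈ Submonoid.closure
      (Set.range fun i : Fin (n + 1) => Equiv.swap i.castSucc i.succ) := by
    rw [hcl]; exact Submonoid.mem_top τ
  obtain ⟨L, hLmem, hLprod⟩ := Submonoid.exists_list_of_mem_closure hτ2
  have := key L.length L le_rfl hLmem (by rw [hLprod]; exact hτ)
  rw [hLprod] at this
  exact this
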